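/- An element γ ∈ Aut(T) of the infinite rooted binary tree is an odometer (i.e., acts transitively on every level n) if and only if sgn_n(γ) = −1 for every n ≥ 1, where sgn_n is the sign of the permutation induced on the 2^n vertices of level n. -/

import Mathlib

open Equiv

/-- Vertices of the infinite rooted binary tree: finite words over `Bool`.
The parent of a nonempty word is `dropLast`. -/
abbrev Wd := List Bool

/-- The group `Ω = Aut(T)` of automorphisms of the infinite rooted binary tree,
realized as the subgroup of permutations of the vertex set preserving length
(levels) and the parent relation. -/
def OmegaSG : Subgroup (Equiv.Perm Wd) where
  carrier := {σ | (∀ w, (σ w).length = w.length) ∧ ∀ w, (σ w).dropLast = σ w.dropLast}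
  one_mem' := ⟨fun _ => rfl, fun _ => rfl⟩
  mul_mem' := by
    rintro σ τ ⟨hσl, hσd⟩ ⟨hτl, hτd⟩
    refine ⟨fun w => ?_, fun w => ?_⟩
    · simp [Equiv.Perm.mul_apply, hσl, hτl]
    · simp [Equiv.Perm.mul_apply, hσd, hτd]
  inv_mem' := by
    rintro σ ⟨hl, hd⟩
    refine ⟨fun w => ?_, fun w => ?_⟩
    · have := hl (σ⁻¹ w)
      rw [show σ (σ⁻¹ w) = w from σ.apply_symm_apply w] at this
      exact this.symm
    · apply σ.injective
      have := hd (σ⁻¹ w)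
      rw [show σ (σ⁻¹ w) = w from σ.apply_symm_apply w] at this
      rw [← this]
      simp

/-- The section pairing: `(u,v)` acts as `u` on the subtree rooted at `false`
and as `v` on the subtree rooted at `true`. -/
def pairFun (f g : Wd → Wd) : Wd → Wd
  | [] => []
  | false :: w => false :: f w
  | true :: w => true :: g w

@[simp] lemma pairFun_nil (f g : Wd → Wd) : pairFun f g [] = [] := rfl
@[simp] lemma pairFun_false (f g : Wd → Wd) (w : Wd) :
    pairFun f g (false :: w) = false :: f w := rfl
@[simp] lemma pairFun_true (f g : Wd → Wd) (w : Wd) :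
    pairFun f g (true :: w) = true :: g w := rfl

lemma pairFun_comp (f g f' g' : Wd → Wd) (hf : ∀ w, f (f' w) = w) (hg : ∀ w, g (g' w) = w) :
    ∀ w, pairFun f g (pairFun f' g' w) = w := by
  rintro (_ | ⟨(_|_), w⟩) <;> simp [hf, hg]

/-- The permutation `(u,v)` of the tree. -/
def pairPerm (u v : Equiv.Perm Wd) : Equiv.Perm Wd where
  toFun := pairFun u v
  invFun := pairFun u.symm v.symm
  left_inv := pairFun_comp _ _ _ _ (fun w => u.symm_apply_apply w) (fun w => v.symm_apply_apply w)
  right_inv := pairFun_comp _ _ _ _ (fun w => u.apply_symm_apply w) (fun w => v.apply_symm_apply w)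

@[simp] lemma pairPerm_apply (u v : Equiv.Perm Wd) (w : Wd) :
    pairPerm u v w = pairFun u v w := rfl

/-- The first-level swap `σ`. -/
def swapPerm : Equiv.Perm Wd where
  toFun w := match w with | [] => [] | b :: w => (!b) :: w
  invFun w := match w with | [] => [] | b :: w => (!b) :: w
  left_inv := by rintro (_ | ⟨b, w⟩) <;> simp
  right_inv := by rintro (_ | ⟨b, w⟩) <;> simp

@[simp] lemma swapPerm_nil : swapPerm [] = [] := rfl
@[simp] lemma swapPerm_cons (b : Bool) (w : Wd) : swapPerm (b :: w) = (!b) :: w := rfl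

lemma swapPerm_mem : swapPerm ∈ OmegaSG := by
  constructor
  · rintro (_ | ⟨b, w⟩) <;> simp
  · rintro (_ | ⟨b, w⟩)
    · simp
    · rcases eq_or_ne w [] with rfl | hw
      · simp
      · simp only [swapPerm_cons, List.dropLast_cons_of_ne_nil hw]

lemma mem_omega_length {u : Equiv.Perm Wd} (hu : u ∈ OmegaSG) (w : Wd) :
    (u w).length = w.length := hu.1 w

lemma mem_omega_ne_nil {u : Equiv.Perm Wd} (hu : u ∈ OmegaSG) {w : Wd} (hw : w ≠ []) :
    u w ≠ [] := by
  intro h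
  exact hw (List.eq_nil_of_length_eq_zero (by rw [← hu.1 w, h]; rfl))

lemma mem_omega_nil {u : Equiv.Perm Wd} (hu : u ∈ OmegaSG) : u [] = [] :=
  List.eq_nil_of_length_eq_zero (hu.1 [])

lemma pairPerm_mem {u v : Equiv.Perm Wd} (hu : u ∈ OmegaSG) (hv : v ∈ OmegaSG) :
    pairPerm u v ∈ OmegaSG := by
  constructor
  · rintro (_ | ⟨(_|_), w⟩) <;> simp [hu.1, hv.1]
  · rintro (_ | ⟨(_|_), w⟩)
    · simp
    · rcases eq_or_ne w [] with rfl | hw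
      · simp [mem_omega_nil hu]
      · simp only [pairPerm_apply, pairFun_false, List.dropLast_cons_of_ne_nil hw,
          List.dropLast_cons_of_ne_nil (mem_omega_ne_nil hu hw)]
        rw [hu.2]
    · rcases eq_or_ne w [] with rfl | hw
      · simp [mem_omega_nil hv]
      · simp only [pairPerm_apply, pairFun_true, List.dropLast_cons_of_ne_nil hw,
          List.dropLast_cons_of_ne_nil (mem_omega_ne_nil hv hw)]
        rw [hv.2]

/-- `(u,v)` as an element of `Ω`. -/
def pairOm (u v : OmegaSG) : OmegaSG := ⟨pairPerm u.1 v.1, pairPerm_mem u.2 v.2⟩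

/-- `σ` as an element of `Ω`. -/
def swapOm : OmegaSG := ⟨swapPerm, swapPerm_mem⟩

/-! ### Levels, restriction, sign, odometers -/

/-- Level `n` of the tree: words of length `n`. -/
abbrev Lv (n : ℕ) := {w : Wd // w.length = n}

instance fintypeLv (n : ℕ) : Fintype (Lv n) := by
  apply Fintype.ofSurjective (fun g : Fin n → Bool => (⟨List.ofFn g, List.length_ofFn (f := g)⟩ : Lv n))
  rintro ⟨w, rfl⟩
  exact ⟨w.get, Subtype.ext (List.ofFn_get w)⟩

/-- The permutation induced by `g ∈ Ω` on level `n`. -/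
def levelPerm (n : ℕ) (g : OmegaSG) : Equiv.Perm (Lv n) where
  toFun w := ⟨g.1 w.1, by rw [mem_omega_length g.2, w.2]⟩
  invFun w := ⟨(g⁻¹ : OmegaSG).1 w.1, by rw [mem_omega_length (g⁻¹ : OmegaSG).2, w.2]⟩
  left_inv w := Subtype.ext (by simp)
  right_inv w := Subtype.ext (by simp)

/-- Restriction to level `n` as a group homomorphism. -/
def levelHom (n : ℕ) : OmegaSG →* Equiv.Perm (Lv n) where
  toFun := levelPerm n
  map_one' := Equiv.ext fun w => Subtype.ext rfl
  map_mul' g h := Equiv.ext fun w => Subtype.ext rfl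

/-- `sgn_n`: the sign of the permutation induced on level `n`. -/
noncomputable def sgn (n : ℕ) (g : OmegaSG) : ℤˣ := Equiv.Perm.sign (levelPerm n g)

/-- An odometer: an element acting transitively on every level of the tree. -/
def IsOdometer (g : OmegaSG) : Prop :=
  ∀ n : ℕ, ∀ v w : Lv n, ∃ k : ℤ, ((g ^ k : OmegaSG) : Equiv.Perm Wd) v.1 = w.1

/-! ### The profinite topology on `Aut(T)` -/

instance : TopologicalSpace Wd := ⊥
instance : DiscreteTopology Wd := ⟨rfl⟩
instance : TopologicalSpace (Equiv.Perm Wd) :=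
  TopologicalSpace.induced (fun g => (g : Wd → Wd)) Pi.topologicalSpace

lemma continuous_permCoe : Continuous (fun g : Equiv.Perm Wd => (g : Wd → Wd)) :=
  continuous_induced_dom

lemma continuous_permApply (w : Wd) : Continuous fun g : Equiv.Perm Wd => g w :=
  (continuous_apply w).comp continuous_permCoe

instance : IsTopologicalGroup (Equiv.Perm Wd) where
  continuous_mul := by
    apply continuous_induced_rng.2
    apply continuous_pi
    intro w
    rw [continuous_discrete_rng]
    intro y
    have h : (fun p : Equiv.Perm Wd × Equiv.Perm Wd => ((p.1 * p.2 : Equiv.Perm Wd) : Wd → Wd) w) ⁻¹' {y}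
        = ⋃ x : Wd, {p : Equiv.Perm Wd × Equiv.Perm Wd | p.2 w = x} ∩ {p | p.1 x = y} := by
      ext p
      simp only [Set.mem_preimage, Set.mem_singleton_iff, Set.mem_iUnion, Set.mem_inter_iff,
        Set.mem_setOf_eq, Equiv.Perm.mul_apply]
      constructor
      · intro hh; exact ⟨p.2 w, rfl, hh⟩
      · rintro ⟨x, rfl, hh⟩; exact hh
    show IsOpen ((fun p : Equiv.Perm Wd × Equiv.Perm Wd =>
      ((p.1 * p.2 : Equiv.Perm Wd) : Wd → Wd) w) ⁻¹' {y})
    rw [h]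
    refine isOpen_iUnion fun x => IsOpen.inter ?_ ?_
    · exact IsOpen.preimage ((continuous_permApply w).comp continuous_snd) (isOpen_discrete {x})
    · exact IsOpen.preimage ((continuous_permApply x).comp continuous_fst) (isOpen_discrete {y})
  continuous_inv := by
    apply continuous_induced_rng.2
    apply continuous_pi
    intro w
    rw [continuous_discrete_rng]
    intro y
    have h : (fun g : Equiv.Perm Wd => ((g⁻¹ : Equiv.Perm Wd) : Wd → Wd) w) ⁻¹' {y}
        = {g : Equiv.Perm Wd | g y = w} := by
      ext g
      simp only [Set.mem_preimage, Set.mem_singleton_iff, Set.mem_setOf_eq]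
      constructor
      · rintro rfl; simp
      · intro hh; rw [← hh]; simp
    show IsOpen ((fun g : Equiv.Perm Wd => ((g⁻¹ : Equiv.Perm Wd) : Wd → Wd) w) ⁻¹' {y})
    rw [h]
    exact IsOpen.preimage (continuous_permApply y) (isOpen_discrete {w})

/-! ### The recursive generators `a₁ = σ`, `a₂ = (a₃⁻¹, a₂⁻¹)σ`, `a₃ = (a₂, a₃)` -/

mutual
  /-- The underlying function of `a₂`. -/
  def pA : Wd → Wd
    | [] => []
    | false :: w => true :: piA w
    | true :: w => false :: qiA w
  /-- The underlying function of `a₃`. -/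
  def qA : Wd → Wd
    | [] => []
    | false :: w => false :: pA w
    | true :: w => true :: qA w
  /-- The underlying function of `a₂⁻¹`. -/
  def piA : Wd → Wd
    | [] => []
    | false :: w => true :: qA w
    | true :: w => false :: pA w
  /-- The underlying function of `a₃⁻¹`. -/
  def qiA : Wd → Wd
    | [] => []
    | false :: w => false :: piA w
    | true :: w => true :: qiA w
end

lemma a_inv_lemma : ∀ w : Wd, pA (piA w) = w ∧ piA (pA w) = w ∧ qA (qiA w) = w ∧ qiA (qA w) = w := by
  intro w
  induction w with
  | nil => simp [pA, qA, piA, qiA]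
  | cons b w ih =>
    cases b <;>
      simp [pA, qA, piA, qiA, ih.1, ih.2.1, ih.2.2.1, ih.2.2.2]

/-- The generator `a₂`. -/
def a2 : Equiv.Perm Wd where
  toFun := pA
  invFun := piA
  left_inv w := (a_inv_lemma w).2.1
  right_inv w := (a_inv_lemma w).1

/-- The generator `a₃`. -/
def a3 : Equiv.Perm Wd where
  toFun := qA
  invFun := qiA
  left_inv w := (a_inv_lemma w).2.2.2
  right_inv w := (a_inv_lemma w).2.2.1

lemma a_length_lemma : ∀ w : Wd, (pA w).length = w.length ∧ (qA w).length = w.length ∧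
    (piA w).length = w.length ∧ (qiA w).length = w.length := by
  intro w
  induction w with
  | nil => simp [pA, qA, piA, qiA]
  | cons b w ih =>
    cases b <;>
      simp [pA, qA, piA, qiA, ih.1, ih.2.1, ih.2.2.1, ih.2.2.2]

lemma a_ne_nil {f : Wd → Wd} (hf : ∀ w : Wd, (f w).length = w.length) {w : Wd} (hw : w ≠ []) :
    f w ≠ [] := by
  intro h
  exact hw (List.eq_nil_of_length_eq_zero (by rw [← hf w, h]; rfl))

lemma a_dropLast_lemma : ∀ w : Wd, (pA w).dropLast = pA w.dropLast ∧
    (qA w).dropLast = qA w.dropLast ∧ (piA w).dropLast = piA w.dropLast ∧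
    (qiA w).dropLast = qiA w.dropLast := by
  intro w
  induction w with
  | nil => simp [pA, qA, piA, qiA]
  | cons b w ih =>
    rcases eq_or_ne w [] with rfl | hw
    · cases b <;> simp [pA, qA, piA, qiA]
    · have hp := a_ne_nil (fun w => (a_length_lemma w).1) hw
      have hq := a_ne_nil (fun w => (a_length_lemma w).2.1) hw
      have hpi := a_ne_nil (fun w => (a_length_lemma w).2.2.1) hw
      have hqi := a_ne_nil (fun w => (a_length_lemma w).2.2.2) hw
      cases b <;>
        simp [pA, qA, piA, qiA, List.dropLast_cons_of_ne_nil hw,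
          List.dropLast_cons_of_ne_nil hp, List.dropLast_cons_of_ne_nil hq,
          List.dropLast_cons_of_ne_nil hpi, List.dropLast_cons_of_ne_nil hqi,
          ih.1, ih.2.1, ih.2.2.1, ih.2.2.2]

lemma a2_mem : a2 ∈ OmegaSG :=
  ⟨fun w => (a_length_lemma w).1, fun w => (a_dropLast_lemma w).1⟩

lemma a3_mem : a3 ∈ OmegaSG :=
  ⟨fun w => (a_length_lemma w).2.1, fun w => (a_dropLast_lemma w).2.1⟩

/-- `a₁ = σ` as an element of `Ω`. -/
def A1 : OmegaSG := swapOm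
/-- `a₂` as an element of `Ω`. -/
def A2 : OmegaSG := ⟨a2, a2_mem⟩
/-- `a₃` as an element of `Ω`. -/
def A3 : OmegaSG := ⟨a3, a3_mem⟩

/-- `G = ⟨⟨a₁, a₃⟩⟩`, the topological closure of the subgroup generated by `a₁` and `a₃`:
a model of the geometric iterated monodromy group of `f(x) = 2/(x-1)²`. -/
noncomputable def Ggrp : Subgroup OmegaSG :=
  (Subgroup.closure {A1, A3}).topologicalClosure

/-- The normal closure in `G` of the closed subgroup generated by an element `c`:
the closed subgroup generated by all `G`-conjugates of `c`. -/
noncomputable def nclG (c : OmegaSG) : Subgroup OmegaSG :=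
  (Subgroup.closure {x | ∃ g ∈ Ggrp, x = g * c * g⁻¹}).topologicalClosure

/-- `U`, the normal closure in `G` of `⟨⟨a₂a₃⁻¹⟩⟩`. -/
noncomputable def Ugrp : Subgroup OmegaSG := nclG (A2 * A3⁻¹)

/-- `H₁`, the normal closure in `G` of `⟨⟨a₁⟩⟩`. -/
noncomputable def H1grp : Subgroup OmegaSG := nclG A1

/-- `H₃`, the normal closure in `G` of `⟨⟨a₃⟩⟩`. -/
noncomputable def H3grp : Subgroup OmegaSG := nclG A3


/-! ### Auxiliary lemmas for stmt3 -/

section AbstractPerm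

variable {α : Type*} [Fintype α] [DecidableEq α]

lemma sign_eq_neg_one_of_transitive (f : Equiv.Perm α)
    (h2 : 2 ≤ Fintype.card α) (he : Even (Fintype.card α))
    (htr : ∀ x y : α, f.SameCycle x y) : Equiv.Perm.sign f = -1 := by
  have hnofix : ∀ x : α, f x ≠ x := by
    intro x hx
    obtain ⟨y, hy⟩ := Fintype.exists_ne_of_one_lt_card h2 x
    obtain ⟨k, hk⟩ := htr x y
    rw [Equiv.Perm.zpow_apply_eq_self_of_apply_eq_self hx k] at hk
    exact hy hk.symm
  have hne : Nonempty α := Fintype.card_pos_iff.mp (by omega)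
  obtain ⟨x⟩ := hne
  have hc : f.IsCycle := ⟨x, hnofix x, fun y _ => htr x y⟩
  have hs : f.support = Finset.univ :=
    Finset.eq_univ_iff_forall.mpr fun y => Equiv.Perm.mem_support.mpr (hnofix y)
  rw [hc.sign, hs, Finset.card_univ, he.neg_one_pow]

lemma transitive_of_sign {β : Type*} [Fintype β] [DecidableEq β]
    (p : α → β) (f : Equiv.Perm α) (g : Equiv.Perm β)
    (hsemi : ∀ a, p (f a) = g (p a))
    (hcard : Fintype.card α = 2 * Fintype.card β)
    (hβ : 0 < Fintype.card β)
    (hg : ∀ x y : β, g.SameCycle x y)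
    (hsign : Equiv.Perm.sign f = -1) :
    ∀ x y : α, f.SameCycle x y := by
  by_contra hne
  set N := Fintype.card β with hN
  have hsemipow : ∀ (k : ℕ) (a : α), p ((f ^ k) a) = (g ^ k) (p a) := by
    intro k
    induction k with
    | zero => intro a; simp
    | succ k ih =>
        intro a
        rw [pow_succ, Equiv.Perm.mul_apply, ih, hsemi, pow_succ, Equiv.Perm.mul_apply]
  have hgnofix : 2 ≤ N → ∀ b : β, g b ≠ b := by
    intro h1 b hb
    obtain ⟨c, hcb⟩ := Fintype.exists_ne_of_one_lt_card h1 b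
    obtain ⟨k, hk⟩ := hg b c
    rw [Equiv.Perm.zpow_apply_eq_self_of_apply_eq_self hb k] at hk
    exact hcb hk.symm
  have key : ∀ a : α, f a ≠ a → (f.cycleOf a).support.card = N := by
    intro a ha
    have hc : (f.cycleOf a).IsCycle := Equiv.Perm.isCycle_cycleOf f ha
    set m := (f.cycleOf a).support.card with hm
    have hord : orderOf (f.cycleOf a) = m := hc.orderOf
    have hfm : (f ^ m) a = a := by
      rw [← Equiv.Perm.cycleOf_pow_apply_self f a m, ← hord, pow_orderOf_eq_one]
      rfl
    have hgm : (g ^ m) (p a) = p a := by rw [← hsemipow, hfm]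
    have hm2 : 2 ≤ m := hc.two_le_card_support
    have hmle : m ≤ 2 * N := by
      have h := Finset.card_le_univ (f.cycleOf a).support
      omega
    have hmne : m ≠ 2 * N := by
      intro hm2N
      apply hne
      have hsu : (f.cycleOf a).support = Finset.univ :=
        Finset.eq_univ_of_card _ (by rw [← hm, hm2N, ← hcard])
      have hall : ∀ y : α, f.SameCycle a y := by
        intro y
        have hy : y ∈ (f.cycleOf a).support := by rw [hsu]; exact Finset.mem_univ y
        exact (Equiv.Perm.mem_support_cycleOf_iff.mp hy).1
      exact fun x y => (hall x).symm.trans (hall y)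
    have hNdvd : N ∣ m := by
      rcases Nat.lt_or_ge N 2 with h1 | h1
      · have : N = 1 := by omega
        rw [this]; exact Nat.one_dvd m
      · have hnb : Nonempty β := Fintype.card_pos_iff.mp hβ
        obtain ⟨b⟩ := hnb
        have hgc : g.IsCycle := ⟨b, hgnofix h1 b, fun y _ => hg b y⟩
        have hgs : g.support = Finset.univ :=
          Finset.eq_univ_iff_forall.mpr fun y => Equiv.Perm.mem_support.mpr (hgnofix h1 y)
        have hordg : orderOf g = N := by rw [hgc.orderOf, hgs, Finset.card_univ]
        have hgm1 : g ^ m = 1 := hgc.pow_eq_one_iff.mpr ⟨p a, hgnofix h1 (p a), hgm⟩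
        rw [← hordg]
        exact orderOf_dvd_of_pow_eq_one hgm1
    obtain ⟨q, hq⟩ := hNdvd
    have hq2 : q ≤ 2 := by
      refine Nat.le_of_mul_le_mul_left ?_ hβ
      rw [← hq]
      omega
    have hq0 : q ≠ 0 := by rintro rfl; simp at hq; omega
    have hq2' : q ≠ 2 := by rintro rfl; rw [Nat.mul_comm] at hq; exact hmne hq
    have hq1 : q = 1 := by omega
    rw [hq1, Nat.mul_one] at hq
    exact hq
  rcases Finset.eq_empty_or_nonempty f.support with hsupp | ⟨a, ha⟩
  · rw [Equiv.Perm.support_eq_empty_iff] at hsupp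
    rw [hsupp, map_one] at hsign
    exact absurd hsign (by decide)
  · have ha' : f a ≠ a := Equiv.Perm.mem_support.mp ha
    have hN2 : 2 ≤ N := by
      have hk := key a ha'
      have h2 := (Equiv.Perm.isCycle_cycleOf f ha').two_le_card_support
      omega
    have hfsupp : f.support = Finset.univ :=
      Finset.eq_univ_iff_forall.mpr fun y =>
        Equiv.Perm.mem_support.mpr fun hy => hgnofix hN2 (p y) (by rw [← hsemi, hy])
    have hct : ∀ t ∈ f.cycleType, t = N := by
      intro t ht
      rw [Equiv.Perm.cycleType_def, Multiset.mem_map] at ht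
      obtain ⟨c, hc, rfl⟩ := ht
      have hcmem : c ∈ f.cycleFactorsFinset := hc
      have hcyc := (Equiv.Perm.mem_cycleFactorsFinset_iff.mp hcmem).1
      obtain ⟨x, hx, -⟩ := hcyc
      have hxs : x ∈ c.support := Equiv.Perm.mem_support.mpr hx
      have hcx : c = f.cycleOf x := Equiv.Perm.cycle_is_cycleOf hxs hcmem
      have hfx : f x ≠ x := by
        have h := (Equiv.Perm.mem_cycleFactorsFinset_iff.mp hcmem).2 x hxs
        rw [← h]; exact hx
      simpa [Function.comp, hcx] using key x hfx
    have hrep : f.cycleType = Multiset.replicate (Multiset.card f.cycleType) N :=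
      Multiset.eq_replicate_card.mpr hct
    have hsum : f.cycleType.sum = 2 * N := by
      rw [Equiv.Perm.sum_cycleType, hfsupp, Finset.card_univ, hcard]
    have hcardct : Multiset.card f.cycleType = 2 := by
      rw [hrep, Multiset.sum_replicate, smul_eq_mul] at hsum
      exact Nat.eq_of_mul_eq_mul_right (by omega) hsum
    rw [Equiv.Perm.sign_of_cycleType, hsum, hcardct] at hsign
    have heven : ((-1 : ℤˣ)) ^ (2 * N + 2) = 1 := Even.neg_one_pow ⟨N + 1, by omega⟩
    rw [heven] at hsign
    exact absurd hsign (by decide)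

end AbstractPerm

lemma card_Lv (n : ℕ) : Fintype.card (Lv n) = 2 ^ n := by
  have hb : Function.Bijective
      (fun g : Fin n → Bool => (⟨List.ofFn g, List.length_ofFn (f := g)⟩ : Lv n)) := by
    constructor
    · intro g g' h
      have := congrArg Subtype.val h
      exact List.ofFn_injective this
    · rintro ⟨w, rfl⟩
      exact ⟨w.get, Subtype.ext (List.ofFn_get w)⟩
  have := Fintype.card_of_bijective hb
  simp only [Fintype.card_fun, Fintype.card_fin, Fintype.card_bool] at this
  exact this.symm

/-- The parent projection between consecutive levels. -/
def lvProj (n : ℕ) : Lv (n + 1) → Lv n :=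
  fun w => ⟨w.1.dropLast, by simp [List.length_dropLast, w.2]⟩

lemma lvProj_semiconj (γ : OmegaSG) (n : ℕ) (w : Lv (n + 1)) :
    lvProj n (levelPerm (n + 1) γ w) = levelPerm n γ (lvProj n w) :=
  Subtype.ext (γ.2.2 w.1)

lemma levelPerm_zpow (γ : OmegaSG) (n : ℕ) (k : ℤ) :
    (levelPerm n γ) ^ k = levelPerm n (γ ^ k) := by
  have h := map_zpow (levelHom n) γ k
  exact h.symm

lemma odometer_iff_sameCycle (γ : OmegaSG) :
    IsOdometer γ ↔ ∀ n : ℕ, ∀ v w : Lv n, (levelPerm n γ).SameCycle v w := by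
  have hkey : ∀ (k : ℤ) (n : ℕ) (v : Lv n),
      (((levelPerm n γ) ^ k) v).1 = ((γ ^ k : OmegaSG) : Equiv.Perm Wd) v.1 := by
    intro k n v
    rw [levelPerm_zpow]
    rfl
  constructor
  · intro h n v w
    obtain ⟨k, hk⟩ := h n v w
    exact ⟨k, Subtype.ext (by rw [hkey]; exact hk)⟩
  · intro h n v w
    obtain ⟨k, hk⟩ := h n v w
    exact ⟨k, by rw [← hkey]; exact congrArg Subtype.val hk⟩

lemma lv0_sameCycle (f : Equiv.Perm (Lv 0)) (v w : Lv 0) : f.SameCycle v w := by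
  refine ⟨0, ?_⟩
  have hv : v.1 = [] := List.eq_nil_of_length_eq_zero v.2
  have hw : w.1 = [] := List.eq_nil_of_length_eq_zero w.2
  simpa using Subtype.ext (hv.trans hw.symm)

/-- `γ ∈ Aut(T)` is an odometer iff `sgn_n(γ) = -1` for all `n ≥ 1`. -/
theorem stmt3 (γ : OmegaSG) :
    IsOdometer γ ↔ ∀ n : ℕ, 1 ≤ n → sgn n γ = -1 := by
  rw [odometer_iff_sameCycle]
  constructor
  · intro h n hn
    have h2 : 2 ≤ Fintype.card (Lv n) := by
      rw [card_Lv]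
      calc 2 = 2 ^ 1 := by norm_num
      _ ≤ 2 ^ n := Nat.pow_le_pow_right (by norm_num) hn
    have he : Even (Fintype.card (Lv n)) := by
      rw [card_Lv]
      exact Nat.even_pow.mpr ⟨even_two, by omega⟩
    exact sign_eq_neg_one_of_transitive _ h2 he (h n)
  · intro h n
    induction n with
    | zero => exact fun v w => lv0_sameCycle _ v w
    | succ n ih =>
        refine transitive_of_sign (lvProj n) (levelPerm (n + 1) γ) (levelPerm n γ)
          (lvProj_semiconj γ n) ?_ ?_ ih ?_
        · rw [card_Lv, card_Lv]; ring
        · rw [card_Lv]; positivity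
        · exact h (n + 1) (by omega)
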